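/- Let R be a commutative Banach ring isolated at 0, M a Banach R-module isolated at 0, and I ⊆ R any ideal. Then R/I equipped with the quotient seminorm is a Banach R-module isolated at 0, and the natural map (R/I) ⊗̂_R M → M/IM is an isomorphism of Banach R-modules. -/

import Mathlib

open scoped TensorProduct

variable (R M : Type*) [NormedCommRing R] [CompleteSpace R]
  [NormedAddCommGroup M] [Module R M] [IsBoundedSMul R M] [CompleteSpace M]
  (I : Ideal R)

/-- The quotient seminorm on `R ⧸ I`. -/
noncomputable def qR (x : R ⧸ I) : ℝ :=
  sInf {c : ℝ | ∃ r : R, Ideal.Quotient.mk I r = x ∧ ‖r‖ = c}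

/-- The quotient seminorm on `M ⧸ IM`. -/
noncomputable def qM (y : M ⧸ (I • ⊤ : Submodule R M)) : ℝ :=
  sInf {c : ℝ | ∃ m : M, Submodule.Quotient.mk m = y ∧ ‖m‖ = c}

/-- The projective tensor seminorm on `(R ⧸ I) ⊗[R] M` (with `R ⧸ I` carrying the
quotient seminorm); for modules isolated at `0` the algebraic tensor product with this
seminorm is the completed projective tensor product `(R ⧸ I) ⊗̂[R] M`. -/
noncomputable def pn16 (t : (R ⧸ I) ⊗[R] M) : ℝ :=
  sInf {c : ℝ | ∃ l : List ((R ⧸ I) × M),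
      (l.map fun p => p.1 ⊗ₜ[R] p.2).sum = t ∧
      (l.map fun p => qR R I p.1 * ‖p.2‖).sum = c}

lemma qR_set_nonempty (x : R ⧸ I) :
    {c : ℝ | ∃ r : R, Ideal.Quotient.mk I r = x ∧ ‖r‖ = c}.Nonempty := by
  obtain ⟨r, hr⟩ := Ideal.Quotient.mk_surjective x
  exact ⟨‖r‖, r, hr, rfl⟩

lemma qR_nonneg (x : R ⧸ I) : 0 ≤ qR R I x :=
  Real.sInf_nonneg (by rintro c ⟨r, -, rfl⟩; exact norm_nonneg r)

lemma qR_le (r : R) : qR R I (Ideal.Quotient.mk I r) ≤ ‖r‖ :=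
  csInf_le ⟨0, by rintro c ⟨s, -, rfl⟩; exact norm_nonneg s⟩ ⟨r, rfl, rfl⟩

lemma qM_le (m : M) (y : M ⧸ (I • ⊤ : Submodule R M))
    (h : Submodule.Quotient.mk m = y) : qM R M I y ≤ ‖m‖ :=
  csInf_le ⟨0, by rintro c ⟨s, -, rfl⟩; exact norm_nonneg s⟩ ⟨m, h, rfl⟩

lemma exists_list (t : (R ⧸ I) ⊗[R] M) :
    ∃ l : List ((R ⧸ I) × M), (l.map fun p => p.1 ⊗ₜ[R] p.2).sum = t := by
  induction t using TensorProduct.induction_on with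
  | zero => exact ⟨[], rfl⟩
  | tmul x m => exact ⟨[(x, m)], by simp⟩
  | add a b ha hb =>
    obtain ⟨l1, h1⟩ := ha; obtain ⟨l2, h2⟩ := hb
    exact ⟨l1 ++ l2, by simp [h1, h2]⟩

/-- For `R` a Banach ring isolated at `0`, `M` a Banach `R`-module isolated at `0` and
`I ⊆ R` any ideal: `R ⧸ I` with the quotient seminorm is a Banach `R`-module isolated at
`0`, and the natural map `(R ⧸ I) ⊗̂[R] M → M ⧸ IM` is an isomorphism of Banach
`R`-modules (a bijective bounded map with bounded inverse). -/
theorem stmt16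
    (hR : ∃ ε > (0 : ℝ), ∀ r : R, ‖r‖ < ε → r = 0)
    (hM : ∃ ε > (0 : ℝ), ∀ m : M, ‖m‖ < ε → m = 0) :
    (∃ ε > (0 : ℝ), ∀ x : R ⧸ I, qR R I x < ε → x = 0) ∧
    ∃ φ : ((R ⧸ I) ⊗[R] M) →ₗ[R] (M ⧸ (I • ⊤ : Submodule R M)),
      (∀ (r : R) (m : M),
        φ (Ideal.Quotient.mk I r ⊗ₜ[R] m) = Submodule.Quotient.mk (r • m)) ∧
      Function.Bijective φ ∧
      ∃ C > (0 : ℝ), ∀ t,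
        qM R M I (φ t) ≤ C * pn16 R M I t ∧ pn16 R M I t ≤ C * qM R M I (φ t) := by
  obtain ⟨ε, hε, hR0⟩ := hR
  -- isolation of R ⧸ I at 0
  have hiso : ∀ x : R ⧸ I, qR R I x < ε → x = 0 := by
    intro x hx
    obtain ⟨c, ⟨r, hr, rfl⟩, hlt⟩ := exists_lt_of_csInf_lt (qR_set_nonempty R I x) hx
    rw [← hr, hR0 r hlt, map_zero]
  -- good lifts
  have hlift : ∀ x : R ⧸ I, ∃ r : R, Ideal.Quotient.mk I r = x ∧ ‖r‖ ≤ 2 * qR R I x := by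
    intro x
    by_cases hx : x = 0
    · exact ⟨0, by simp [hx], by simpa using mul_nonneg (by norm_num : (0:ℝ) ≤ 2) (qR_nonneg R I x)⟩
    · have h1 : ε ≤ qR R I x := le_of_not_gt fun h => hx (hiso x h)
      have h2 : qR R I x < 2 * qR R I x := by linarith
      obtain ⟨c, ⟨r, hr, rfl⟩, hlt⟩ := exists_lt_of_csInf_lt (qR_set_nonempty R I x)
        (show qR R I x < 2 * qR R I x from h2)
      exact ⟨r, hr, le_of_lt hlt⟩
  set e := TensorProduct.quotTensorEquivQuotSMul M I with he
  refine ⟨⟨ε, hε, hiso⟩, e.toLinearMap, ?_, e.bijective, ?_⟩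
  · intro r m; exact TensorProduct.quotTensorEquivQuotSMul_mk_tmul I r m
  · refine ⟨‖(1:R)‖ + 2, by positivity, fun t => ?_⟩
    set C := ‖(1:R)‖ + 2 with hC
    have hCpos : (0:ℝ) < C := by positivity
    have hC2 : (2:ℝ) ≤ C := by have := norm_nonneg (1:R); linarith
    -- key list bound
    have key : ∀ l : List ((R ⧸ I) × M), ∃ m : M,
        (Submodule.Quotient.mk m : M ⧸ (I • ⊤ : Submodule R M)) =
          e ((l.map fun p => p.1 ⊗ₜ[R] p.2).sum) ∧
        ‖m‖ ≤ 2 * (l.map fun p => qR R I p.1 * ‖p.2‖).sum := by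
      intro l
      induction l with
      | nil => exact ⟨0, by simp, by simp⟩
      | cons p l ih =>
        obtain ⟨m, hm, hnm⟩ := ih
        obtain ⟨r, hr, hnr⟩ := hlift p.1
        refine ⟨r • p.2 + m, ?_, ?_⟩
        · have : e (p.1 ⊗ₜ[R] p.2) = Submodule.Quotient.mk (r • p.2) := by
            rw [← hr]; exact TensorProduct.quotTensorEquivQuotSMul_mk_tmul I r p.2
          simp only [List.map_cons, List.sum_cons, map_add, ← hm, this]
          rfl
        · have h1 : ‖r • p.2 + m‖ ≤ ‖r‖ * ‖p.2‖ + ‖m‖ :=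
            (norm_add_le _ _).trans (by gcongr; exact norm_smul_le r p.2)
          have h2 : ‖r‖ * ‖p.2‖ ≤ 2 * qR R I p.1 * ‖p.2‖ :=
            mul_le_mul_of_nonneg_right hnr (norm_nonneg _)
          simp only [List.map_cons, List.sum_cons]
          linarith
    constructor
    · -- qM (e t) ≤ C * pn16 t
      have hne : {c : ℝ | ∃ l : List ((R ⧸ I) × M),
          (l.map fun p => p.1 ⊗ₜ[R] p.2).sum = t ∧
          (l.map fun p => qR R I p.1 * ‖p.2‖).sum = c}.Nonempty := by
        obtain ⟨l, hl⟩ := exists_list R M I t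
        exact ⟨_, l, hl, rfl⟩
      have hdiv : qM R M I (e t) / C ≤ pn16 R M I t := by
        refine le_csInf hne ?_
        rintro c ⟨l, hsum, rfl⟩
        obtain ⟨m, hm, hnm⟩ := key l
        rw [hsum] at hm
        have := (qM_le R M I m (e t) hm).trans hnm
        rw [div_le_iff₀ hCpos]
        calc qM R M I (e t) ≤ 2 * (l.map fun p => qR R I p.1 * ‖p.2‖).sum := this
          _ ≤ (l.map fun p => qR R I p.1 * ‖p.2‖).sum * C := by
            have h0 : 0 ≤ (l.map fun p => qR R I p.1 * ‖p.2‖).sum :=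
              List.sum_nonneg (by
                rintro x hx
                obtain ⟨p, -, rfl⟩ := List.mem_map.mp hx
                exact mul_nonneg (qR_nonneg R I p.1) (norm_nonneg _))
            nlinarith
      rw [div_le_iff₀ hCpos] at hdiv
      show qM R M I (e t) ≤ C * pn16 R M I t
      linarith [hdiv]
    · -- pn16 t ≤ C * qM (e t)
      have hne : {c : ℝ | ∃ m : M, Submodule.Quotient.mk m = e t ∧ ‖m‖ = c}.Nonempty := by
        obtain ⟨m, hm⟩ := Submodule.Quotient.mk_surjective _ (e t)
        exact ⟨‖m‖, m, hm, rfl⟩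
      have hdiv : pn16 R M I t / C ≤ qM R M I (e t) := by
        refine le_csInf hne ?_
        rintro c ⟨m, hm, rfl⟩
        -- t = mk 1 ⊗ m
        have ht : t = Ideal.Quotient.mk I 1 ⊗ₜ[R] m := by
          apply e.injective
          rw [TensorProduct.quotTensorEquivQuotSMul_mk_tmul, one_smul, hm]
        have hb : pn16 R M I t ≤ qR R I (Ideal.Quotient.mk I 1) * ‖m‖ := by
          refine csInf_le ⟨0, ?_⟩ ⟨[(Ideal.Quotient.mk I 1, m)], by simp [ht], by simp⟩
          rintro c ⟨l, -, rfl⟩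
          exact List.sum_nonneg (by
            rintro x hx
            obtain ⟨p, -, rfl⟩ := List.mem_map.mp hx
            exact mul_nonneg (qR_nonneg R I p.1) (norm_nonneg _))
        have hq : qR R I (Ideal.Quotient.mk I 1) * ‖m‖ ≤ C * ‖m‖ := by
          have := (qR_le R I 1).trans (by linarith : ‖(1:R)‖ ≤ C)
          exact mul_le_mul_of_nonneg_right this (norm_nonneg m)
        rw [div_le_iff₀ hCpos]
        nlinarith [norm_nonneg m]
      rw [div_le_iff₀ hCpos] at hdiv
      show pn16 R M I t ≤ C * qM R M I (e t)
      linarith [hdiv]
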